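/- arXiv:2605.22728 — 10 statements merged into one kernel-verified Lean document; each statement's English description precedes it below -/
import Mathlib

section
/- For every dimension d ≥ 1 and all ε, γ > 0, the proximity map P_{γ,ε} is the two-sided inverse of the map t ↦ t + γ·t/max(ε, ‖t‖) on ℝ^d: for every t ∈ ℝ^d one has P_{γ,ε}(t) + γ·P_{γ,ε}(t)/max(ε, ‖P_{γ,ε}(t)‖) = t, and for every s ∈ ℝ^d one has P_{γ,ε}(s + γ·s/max(ε, ‖s‖)) = s. -/
open Classical

/-- The proximity map of `γ` times the Huber-regularized Euclidean norm. -/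
noncomputable def proxHuber {d : ℕ} (γ ε : ℝ) (t : EuclideanSpace ℝ (Fin d)) :
    EuclideanSpace ℝ (Fin d) :=
  if t = 0 then 0 else (max (ε / (ε + γ)) (1 - γ / ‖t‖)) • t

/-- The proximity map `P_{γ,ε}` is the two-sided inverse of
`t ↦ t + γ • (t / max ε ‖t‖)` on `ℝ^d`. -/
theorem proxHuber_two_sided_inverse (d : ℕ) (hd : 1 ≤ d) (ε γ : ℝ)
    (hε : 0 < ε) (hγ : 0 < γ) :
    (∀ t : EuclideanSpace ℝ (Fin d),
      proxHuber γ ε t + γ • ((max ε ‖proxHuber γ ε t‖)⁻¹ • proxHuber γ ε t) = t) ∧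
    (∀ s : EuclideanSpace ℝ (Fin d),
      proxHuber γ ε (s + γ • ((max ε ‖s‖)⁻¹ • s)) = s) := by
  have hεγ : 0 < ε + γ := by linarith
  constructor
  · intro t
    by_cases ht : t = 0
    · simp [proxHuber, ht]
    · have hnt : 0 < ‖t‖ := norm_pos_iff.mpr ht
      set a : ℝ := max (ε / (ε + γ)) (1 - γ / ‖t‖) with ha
      have haPos : 0 < a := lt_max_of_lt_left (div_pos hε hεγ)
      have hP : proxHuber γ ε t = a • t := by simp [proxHuber, ht, ha]
      have hnormP : ‖a • t‖ = a * ‖t‖ := by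
        rw [norm_smul, Real.norm_eq_abs, abs_of_pos haPos]
      rw [hP, hnormP]
      by_cases hc : ‖t‖ ≤ ε + γ
      · have key : γ / (ε + γ) ≤ γ / ‖t‖ :=
          div_le_div_of_nonneg_left hγ.le hnt hc
        have hid : ε / (ε + γ) = 1 - γ / (ε + γ) := by field_simp; ring
        have ha' : a = ε / (ε + γ) := by
          rw [ha]; apply max_eq_left; rw [hid]; linarith
        have hmax : max ε (a * ‖t‖) = ε := by
          apply max_eq_left
          rw [ha', div_mul_eq_mul_div, div_le_iff₀ hεγ]
          nlinarith
        rw [hmax, smul_smul, smul_smul, ← add_smul]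
        have hone : a + γ * ε⁻¹ * a = 1 := by
          rw [ha']; field_simp; try ring
        rw [hone, one_smul]
      · push_neg at hc
        have key : γ / ‖t‖ < γ / (ε + γ) :=
          div_lt_div_of_pos_left hγ hεγ hc
        have hid : ε / (ε + γ) = 1 - γ / (ε + γ) := by field_simp; ring
        have ha' : a = 1 - γ / ‖t‖ := by
          rw [ha]; apply max_eq_right; rw [hid]; linarith
        have hat : a * ‖t‖ = ‖t‖ - γ := by
          rw [ha']; field_simp
        have hmax : max ε (a * ‖t‖) = ‖t‖ - γ := by
          rw [hat]; apply max_eq_right; linarith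
        rw [hmax, smul_smul, smul_smul, ← add_smul]
        have htγ : ‖t‖ - γ ≠ 0 := ne_of_gt (by linarith)
        have hone : a + γ * (‖t‖ - γ)⁻¹ * a = 1 := by
          rw [ha']; field_simp; try ring
        rw [hone, one_smul]
  · intro s
    by_cases hs : s = 0
    · simp [proxHuber, hs]
    · have hns : 0 < ‖s‖ := norm_pos_iff.mpr hs
      by_cases hc : ‖s‖ ≤ ε
      · have hmax : max ε ‖s‖ = ε := max_eq_left hc
        rw [hmax]
        have harg : s + γ • (ε⁻¹ • s) = ((ε + γ) / ε) • s := by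
          rw [smul_smul]; nth_rewrite 1 [← one_smul ℝ s]
          rw [← add_smul]; congr 1; field_simp
        rw [harg]
        have hcpos : 0 < (ε + γ) / ε := div_pos hεγ hε
        have hne : ((ε + γ) / ε) • s ≠ 0 := by
          simp [smul_eq_zero, hs, ne_of_gt hcpos]
        have hnorm : ‖((ε + γ) / ε) • s‖ = (ε + γ) / ε * ‖s‖ := by
          rw [norm_smul, Real.norm_eq_abs, abs_of_pos hcpos]
        rw [proxHuber, if_neg hne, hnorm]
        have hle : (ε + γ) / ε * ‖s‖ ≤ ε + γ := by
          rw [div_mul_eq_mul_div, div_le_iff₀ hε]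
          nlinarith
        have hpos : 0 < (ε + γ) / ε * ‖s‖ := mul_pos hcpos hns
        have key : γ / (ε + γ) ≤ γ / ((ε + γ) / ε * ‖s‖) :=
          div_le_div_of_nonneg_left hγ.le hpos hle
        have hid : ε / (ε + γ) = 1 - γ / (ε + γ) := by field_simp; ring
        have ha' : max (ε / (ε + γ)) (1 - γ / ((ε + γ) / ε * ‖s‖)) = ε / (ε + γ) := by
          apply max_eq_left; rw [hid]; linarith
        rw [ha', smul_smul]
        have : ε / (ε + γ) * ((ε + γ) / ε) = 1 := by field_simp
        rw [this, one_smul]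
      · push_neg at hc
        have hmax : max ε ‖s‖ = ‖s‖ := max_eq_right hc.le
        rw [hmax]
        have harg : s + γ • (‖s‖⁻¹ • s) = ((‖s‖ + γ) / ‖s‖) • s := by
          rw [smul_smul]; nth_rewrite 1 [← one_smul ℝ s]
          rw [← add_smul]; congr 1; field_simp
        rw [harg]
        have hsγ : 0 < ‖s‖ + γ := by linarith
        have hcpos : 0 < (‖s‖ + γ) / ‖s‖ := div_pos hsγ hns
        have hne : ((‖s‖ + γ) / ‖s‖) • s ≠ 0 := by
          simp [smul_eq_zero, hs, ne_of_gt hcpos]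
        have hnorm : ‖((‖s‖ + γ) / ‖s‖) • s‖ = ‖s‖ + γ := by
          rw [norm_smul, Real.norm_eq_abs, abs_of_pos hcpos]
          field_simp
        rw [proxHuber, if_neg hne, hnorm]
        have key : ε / (ε + γ) ≤ 1 - γ / (‖s‖ + γ) := by
          have h1 : γ / (‖s‖ + γ) ≤ γ / (ε + γ) :=
            div_le_div_of_nonneg_left hγ.le hεγ (by linarith)
          have hid : ε / (ε + γ) = 1 - γ / (ε + γ) := by field_simp; ring
          linarith
        rw [max_eq_right key, smul_smul]
        have h2 : (1 - γ / (‖s‖ + γ)) * ((‖s‖ + γ) / ‖s‖) = 1 := by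
          field_simp; ring
        rw [h2, one_smul]
end

section
/- For every dimension d ≥ 1 and all ε, γ > 0, the proximity map P_{γ,ε} : ℝ^d → ℝ^d is 1-Lipschitz continuous: for all s, t ∈ ℝ^d one has ‖P_{γ,ε}(t) − P_{γ,ε}(s)‖ ≤ ‖t − s‖. In particular, the Lipschitz constant is independent of the regularization parameter ε. -/
open Classical

lemma prox_c_nonneg {ε γ r : ℝ} (hε : 0 < ε) (hγ : 0 < γ) :
    0 ≤ max (ε / (ε + γ)) (1 - γ / r) :=
  le_trans (by positivity) (le_max_left _ _)

lemma prox_c_le_one {ε γ r : ℝ} (hε : 0 < ε) (hγ : 0 < γ) (hr : 0 < r) :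
    max (ε / (ε + γ)) (1 - γ / r) ≤ 1 := by
  apply max_le
  · rw [div_le_one (by positivity)]; linarith
  · have : 0 < γ / r := by positivity
    linarith

/-- The proximity map `P_{γ,ε}` is `1`-Lipschitz continuous, with Lipschitz
constant independent of the regularization parameter `ε`. -/
theorem proxHuber_one_lipschitz (d : ℕ) (hd : 1 ≤ d) (ε γ : ℝ)
    (hε : 0 < ε) (hγ : 0 < γ) (s t : EuclideanSpace ℝ (Fin d)) :
    ‖proxHuber γ ε t - proxHuber γ ε s‖ ≤ ‖t - s‖ := by
  unfold proxHuber
  by_cases ht : t = 0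
  · by_cases hs : s = 0
    · simp [ht, hs]
    · have hb : 0 < ‖s‖ := norm_pos_iff.mpr hs
      simp only [ht, eq_self_iff_true, if_true, if_neg hs, zero_sub, norm_neg, norm_smul,
        Real.norm_eq_abs, abs_of_nonneg (prox_c_nonneg hε hγ)]
      calc max (ε / (ε + γ)) (1 - γ / ‖s‖) * ‖s‖ ≤ 1 * ‖s‖ :=
            mul_le_mul_of_nonneg_right (prox_c_le_one hε hγ hb) (norm_nonneg s)
        _ = ‖s‖ := one_mul _
  · by_cases hs : s = 0
    · have ha : 0 < ‖t‖ := norm_pos_iff.mpr ht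
      simp only [hs, eq_self_iff_true, if_true, if_neg ht, sub_zero, norm_smul,
        Real.norm_eq_abs, abs_of_nonneg (prox_c_nonneg hε hγ)]
      calc max (ε / (ε + γ)) (1 - γ / ‖t‖) * ‖t‖ ≤ 1 * ‖t‖ :=
            mul_le_mul_of_nonneg_right (prox_c_le_one hε hγ ha) (norm_nonneg t)
        _ = ‖t‖ := one_mul _
    · rw [if_neg ht, if_neg hs]
      set a := ‖t‖ with ha_def
      set b := ‖s‖ with hb_def
      have ha : 0 < a := norm_pos_iff.mpr ht
      have hb : 0 < b := norm_pos_iff.mpr hs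
      set ca := max (ε / (ε + γ)) (1 - γ / a) with hca_def
      set cb := max (ε / (ε + γ)) (1 - γ / b) with hcb_def
      have hca0 : 0 ≤ ca := prox_c_nonneg hε hγ
      have hcb0 : 0 ≤ cb := prox_c_nonneg hε hγ
      have hca1 : ca ≤ 1 := prox_c_le_one hε hγ ha
      have hcb1 : cb ≤ 1 := prox_c_le_one hε hγ hb
      -- 1-Lipschitzness of r ↦ c(r) * r
      have e1 : ca * a = max (ε / (ε + γ) * a) (a - γ) := by
        rw [hca_def, max_mul_of_nonneg _ _ ha.le]
        congr 1
        field_simp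
      have e2 : cb * b = max (ε / (ε + γ) * b) (b - γ) := by
        rw [hcb_def, max_mul_of_nonneg _ _ hb.le]
        congr 1
        field_simp
      have hlip : |ca * a - cb * b| ≤ |a - b| := by
        rw [e1, e2]
        refine le_trans (abs_max_sub_max_le_max _ _ _ _) (max_le ?_ ?_)
        · rw [← mul_sub, abs_mul]
          have hα : |ε / (ε + γ)| ≤ 1 := by
            rw [abs_of_nonneg (by positivity)]
            rw [div_le_one (by positivity)]; linarith
          calc |ε / (ε + γ)| * |a - b| ≤ 1 * |a - b| :=
                mul_le_mul_of_nonneg_right hα (abs_nonneg _)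
            _ = |a - b| := one_mul _
        · have : a - γ - (b - γ) = a - b := by ring
          rw [this]
      have hsqlip : (ca * a - cb * b) ^ 2 ≤ (a - b) ^ 2 := by
        have := pow_le_pow_left₀ (abs_nonneg (ca * a - cb * b)) hlip 2
        simpa [sq_abs] using this
      have hCS : (inner ℝ t s : ℝ) ≤ a * b := real_inner_le_norm t s
      have hsq : ‖ca • t - cb • s‖ ^ 2 ≤ ‖t - s‖ ^ 2 := by
        rw [norm_sub_sq_real, norm_sub_sq_real, norm_smul, norm_smul,
          real_inner_smul_left, real_inner_smul_right,
          Real.norm_eq_abs, Real.norm_eq_abs, abs_of_nonneg hca0, abs_of_nonneg hcb0]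
        nlinarith [mul_nonneg (mul_nonneg hca0 ha.le) (mul_nonneg hcb0 hb.le),
          mul_le_mul hca1 hcb1 hcb0 zero_le_one,
          mul_nonneg hca0 hcb0,
          mul_le_mul_of_nonneg_left hCS (mul_nonneg hca0 hcb0),
          sub_nonneg.mpr hCS]
      nlinarith [hsq, norm_nonneg (ca • t - cb • s), norm_nonneg (t - s)]
end

section
/- For every dimension d ≥ 1 and all ε, γ > 0, the proximity map P_{γ,ε} : ℝ^d → ℝ^d is monotone: for all s, t ∈ ℝ^d one has ⟨P_{γ,ε}(t) − P_{γ,ε}(s), t − s⟩ ≥ 0; moreover it is strictly monotone, i.e. the inequality is strict whenever t ≠ s. -/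
open Classical RealInnerProductSpace

/-- The proximity map `P_{γ,ε}` is monotone and even strictly monotone. -/
theorem proxHuber_strictly_monotone (d : ℕ) (hd : 1 ≤ d) (ε γ : ℝ)
    (hε : 0 < ε) (hγ : 0 < γ) (s t : EuclideanSpace ℝ (Fin d)) :
    0 ≤ ⟪proxHuber γ ε t - proxHuber γ ε s, t - s⟫ ∧
    (t ≠ s → 0 < ⟪proxHuber γ ε t - proxHuber γ ε s, t - s⟫) := by
  set c : ℝ := ε / (ε + γ) with hcdef
  have hc : 0 < c := div_pos hε (by linarith)
  set g : EuclideanSpace ℝ (Fin d) → ℝ :=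
    fun x => if x = 0 then c else max c (1 - γ / ‖x‖) with hg
  have hgp : ∀ x : EuclideanSpace ℝ (Fin d), proxHuber γ ε x = g x • x := by
    intro x
    by_cases hx : x = 0 <;> simp [proxHuber, hx, hg, hcdef]
  have hgc : ∀ x, c ≤ g x := by
    intro x
    simp only [hg]
    split
    · exact le_rfl
    · exact le_max_left _ _
  have hmono : ∀ x y : EuclideanSpace ℝ (Fin d), ‖x‖ ≤ ‖y‖ → g x ≤ g y := by
    intro x y hxy
    by_cases hx : x = 0
    · rw [hg]; simp only [hx, if_pos rfl]; exact hgc y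
    · have hxn : (0:ℝ) < ‖x‖ := norm_pos_iff.mpr hx
      have hy : y ≠ 0 := by
        intro h; rw [h, norm_zero] at hxy; linarith
      simp only [hg, if_neg hx, if_neg hy]
      refine max_le_max le_rfl ?_
      have : γ / ‖y‖ ≤ γ / ‖x‖ :=
        div_le_div_of_nonneg_left hγ.le hxn hxy
      linarith
  set a : ℝ := g t with ha
  set b : ℝ := g s with hb
  have hA : c ≤ a := hgc t
  have hB : c ≤ b := hgc s
  have hts : ‖t - s‖ ^ 2 = ‖t‖ ^ 2 - 2 * ⟪t, s⟫ + ‖s‖ ^ 2 := by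
    rw [@norm_sub_sq_real]
  have key : ⟪proxHuber γ ε t - proxHuber γ ε s, t - s⟫ =
      (a + b) / 2 * ‖t - s‖ ^ 2 + (a - b) * (‖t‖ ^ 2 - ‖s‖ ^ 2) / 2 := by
    rw [hgp t, hgp s]
    simp only [inner_sub_left, inner_sub_right, real_inner_smul_left,
      real_inner_self_eq_norm_sq]
    rw [hts]
    have hst : (inner ℝ s t : ℝ) = inner ℝ t s := real_inner_comm t s
    rw [hst]
    ring
  have hsign : 0 ≤ (a - b) * (‖t‖ ^ 2 - ‖s‖ ^ 2) := by
    rcases le_total ‖t‖ ‖s‖ with h | h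
    · have h1 : a ≤ b := hmono t s h
      have h2 : ‖t‖ ^ 2 ≤ ‖s‖ ^ 2 := by
        have := norm_nonneg t; nlinarith
      nlinarith
    · have h1 : b ≤ a := hmono s t h
      have h2 : ‖s‖ ^ 2 ≤ ‖t‖ ^ 2 := by
        have := norm_nonneg s; nlinarith
      exact mul_nonneg (by linarith) (by linarith)
  constructor
  · rw [key]
    have h0 : 0 ≤ ‖t - s‖ ^ 2 := sq_nonneg _
    nlinarith
  · intro hne
    rw [key]
    have h0 : 0 < ‖t - s‖ ^ 2 := by
      have h : (0:ℝ) < ‖t - s‖ := norm_pos_iff.mpr (sub_ne_zero.mpr hne)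
      positivity
    nlinarith
end

section
/- For every dimension d ≥ 1, all ε, γ > 0, every t ∈ ℝ^d, and every x ∈ ℝ^d, the Newton derivative matrix J_{γ,ε}(t) is symmetric and satisfies the two-sided bound (ε/(ε+γ))·‖x‖² ≤ ⟨J_{γ,ε}(t)x, x⟩ ≤ ‖x‖²; in particular 0 ⪯ J_{γ,ε}(t) ⪯ I with an ε/(ε+γ)-improved lower bound. -/
open Classical RealInnerProductSpace

/-- The Newton derivative `J_{γ,ε}(t)` of the proximity map of the
Huber-regularized norm, as a map acting on vectors:
`J_{γ,ε}(t) = I − (γ/‖t‖)(I − t tᵀ/‖t‖²)` if `‖t‖ > γ + ε`, and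
`J_{γ,ε}(t) = (ε/(ε+γ)) I` if `‖t‖ ≤ γ + ε`. -/
noncomputable def newtonProxHuber {d : ℕ} (γ ε : ℝ)
    (t x : EuclideanSpace ℝ (Fin d)) : EuclideanSpace ℝ (Fin d) :=
  if γ + ε < ‖t‖ then x - (γ / ‖t‖) • (x - (⟪t, x⟫ / ‖t‖ ^ 2) • t)
  else (ε / (ε + γ)) • x

lemma newtonProxHuber_aux_symm {d : ℕ} (γ : ℝ) (t x y : EuclideanSpace ℝ (Fin d)) :
    ⟪x - (γ / ‖t‖) • (x - (⟪t, x⟫ / ‖t‖ ^ 2) • t), y⟫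
      = ⟪x, y - (γ / ‖t‖) • (y - (⟪t, y⟫ / ‖t‖ ^ 2) • t)⟫ := by
  simp only [inner_sub_left, inner_sub_right, real_inner_smul_left,
    real_inner_smul_right]
  rw [real_inner_comm x t]
  ring

lemma newtonProxHuber_aux_val {d : ℕ} (γ : ℝ) (t x : EuclideanSpace ℝ (Fin d))
    (ht : 0 < ‖t‖) :
    ⟪x - (γ / ‖t‖) • (x - (⟪t, x⟫ / ‖t‖ ^ 2) • t), x⟫
      = ‖x‖ ^ 2 - (γ / ‖t‖) * (‖x‖ ^ 2 - ⟪t, x⟫ ^ 2 / ‖t‖ ^ 2) := by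
  simp only [inner_sub_left, inner_sub_right, real_inner_smul_left,
    real_inner_smul_right, real_inner_self_eq_norm_sq, real_inner_comm x t]
  field_simp

/-- The Newton derivative matrix `J_{γ,ε}(t)` is symmetric and satisfies the
two-sided bound `(ε/(ε+γ))‖x‖² ≤ ⟨J_{γ,ε}(t)x, x⟩ ≤ ‖x‖²`. -/
theorem newtonProxHuber_symm_and_bounds (d : ℕ) (hd : 1 ≤ d) (ε γ : ℝ)
    (hε : 0 < ε) (hγ : 0 < γ) (t x : EuclideanSpace ℝ (Fin d)) :
    (∀ y : EuclideanSpace ℝ (Fin d),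
      ⟪newtonProxHuber γ ε t x, y⟫ = ⟪x, newtonProxHuber γ ε t y⟫) ∧
    (ε / (ε + γ)) * ‖x‖ ^ 2 ≤ ⟪newtonProxHuber γ ε t x, x⟫ ∧
    ⟪newtonProxHuber γ ε t x, x⟫ ≤ ‖x‖ ^ 2 := by
  have hεγ : 0 < ε + γ := by linarith
  have hratio_le : ε / (ε + γ) ≤ 1 := by
    rw [div_le_one hεγ]; linarith
  have hratio_pos : 0 < ε / (ε + γ) := div_pos hε hεγ
  unfold newtonProxHuber
  by_cases h : γ + ε < ‖t‖
  · simp only [if_pos h]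
    have ht : 0 < ‖t‖ := by linarith
    have ht2 : (0:ℝ) < ‖t‖ ^ 2 := by positivity
    have ha_pos : 0 < γ / ‖t‖ := div_pos hγ ht
    have ha_lt : γ / ‖t‖ < 1 - ε / (ε + γ) := by
      have : 1 - ε / (ε + γ) = γ / (ε + γ) := by field_simp; ring
      rw [this]
      apply div_lt_div_of_pos_left hγ hεγ
      linarith
    have hcs : ⟪t, x⟫ * ⟪t, x⟫ ≤ ⟪t, t⟫ * ⟪x, x⟫ := real_inner_mul_inner_self_le t x
    have htt : ⟪t, t⟫ = ‖t‖ ^ 2 := real_inner_self_eq_norm_sq t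
    have hxx : ⟪x, x⟫ = ‖x‖ ^ 2 := real_inner_self_eq_norm_sq x
    have hnonneg : 0 ≤ ‖x‖ ^ 2 - ⟪t, x⟫ ^ 2 / ‖t‖ ^ 2 := by
      rw [sub_nonneg, div_le_iff₀ ht2]
      nlinarith
    have hle : ‖x‖ ^ 2 - ⟪t, x⟫ ^ 2 / ‖t‖ ^ 2 ≤ ‖x‖ ^ 2 := by
      have : 0 ≤ ⟪t, x⟫ ^ 2 / ‖t‖ ^ 2 := by positivity
      linarith
    refine ⟨fun y => newtonProxHuber_aux_symm γ t x y, ?_, ?_⟩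
    · rw [newtonProxHuber_aux_val γ t x ht]
      nlinarith [mul_le_mul_of_nonneg_left hle ha_pos.le,
        mul_nonneg (le_of_lt ha_pos) hnonneg]
    · rw [newtonProxHuber_aux_val γ t x ht]
      nlinarith [mul_nonneg (le_of_lt ha_pos) hnonneg]
  · simp only [if_neg h, real_inner_smul_left, real_inner_smul_right,
      real_inner_self_eq_norm_sq]
    refine ⟨fun y => trivial, le_refl _, ?_⟩
    nlinarith [sq_nonneg ‖x‖]
end

section
/- For every dimension d ≥ 1, all ε, γ > 0, every t ∈ ℝ^d, and every x ∈ ℝ^d, one has ⟨(I − J_{γ,ε}(t))·J_{γ,ε}(t)·x, x⟩ ≥ 0; that is, the product (I − J_{γ,ε}(t))·J_{γ,ε}(t) is positive semidefinite. -/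
open Classical RealInnerProductSpace

/-- The product `(I − J_{γ,ε}(t)) · J_{γ,ε}(t)` is positive semidefinite. -/
theorem newtonProxHuber_id_sub_mul_posSemidef (d : ℕ) (hd : 1 ≤ d) (ε γ : ℝ)
    (hε : 0 < ε) (hγ : 0 < γ) (t x : EuclideanSpace ℝ (Fin d)) :
    0 ≤ ⟪newtonProxHuber γ ε t x - newtonProxHuber γ ε t (newtonProxHuber γ ε t x),
          x⟫ := by
  unfold newtonProxHuber
  by_cases h : γ + ε < ‖t‖
  · simp only [if_pos h]
    have ht : (0:ℝ) < ‖t‖ := lt_trans (by positivity) h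
    set c := ⟪t, x⟫ / ‖t‖ ^ 2 with hc
    set a := γ / ‖t‖ with ha
    have ha0 : 0 < a := div_pos hγ ht
    have ha1 : a < 1 := (div_lt_one ht).2 (lt_trans (lt_add_of_pos_right γ hε) h)
    have htJ : ⟪t, x - a • (x - c • t)⟫ / ‖t‖ ^ 2 = c := by
      rw [inner_sub_right, inner_smul_right, inner_sub_right, inner_smul_right,
        real_inner_self_eq_norm_sq, hc]
      field_simp
      ring
    rw [htJ]
    have hvec : (x - a • (x - c • t)) - ((x - a • (x - c • t)) -
        a • ((x - a • (x - c • t)) - c • t)) = (a * (1 - a)) • (x - c • t) := by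
      module
    rw [hvec, real_inner_smul_left]
    have hCS : ⟪x - c • t, x⟫ ≥ 0 := by
      rw [inner_sub_left, real_inner_smul_left, hc]
      have := real_inner_mul_inner_self_le t x
      rw [real_inner_self_eq_norm_sq, real_inner_self_eq_norm_sq] at this
      rw [real_inner_self_eq_norm_sq]
      rw [ge_iff_le, sub_nonneg, div_mul_eq_mul_div, div_le_iff₀ (by positivity)]
      calc ⟪t, x⟫ * ⟪t, x⟫ ≤ ‖t‖^2 * ‖x‖^2 := by
            simpa [pow_two] using this
        _ = ‖x‖^2 * ‖t‖^2 := by ring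
    have : 0 ≤ a * (1 - a) := mul_nonneg ha0.le (by linarith)
    exact mul_nonneg this hCS
  · simp only [if_neg h]
    set c := ε / (ε + γ) with hc
    have hc0 : 0 < c := div_pos hε (by linarith)
    have hc1 : c < 1 := (div_lt_one (by linarith)).2 (by linarith)
    have : c • x - c • (c • x) = (c * (1 - c)) • x := by module
    rw [this, real_inner_smul_left, real_inner_self_eq_norm_sq]
    have : 0 ≤ c * (1 - c) := mul_nonneg hc0.le (by linarith)
    positivity
end

section
/- For every dimension d ≥ 1 and all ε, γ > 0, the proximity map P_{γ,ε} is Newton differentiable on ℝ^d with Newton derivative J_{γ,ε}: for every t ∈ ℝ^d and every η > 0 there exists δ > 0 such that for all h ∈ ℝ^d with 0 < ‖h‖ < δ one has ‖P_{γ,ε}(t + h) − P_{γ,ε}(t) − J_{γ,ε}(t + h)·h‖ ≤ η·‖h‖. -/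
set_option maxHeartbeats 1000000


open Classical RealInnerProductSpace

lemma proxHuber_of_le {d : ℕ} {γ ε : ℝ} (hε : 0 < ε) (hγ : 0 < γ)
    {t : EuclideanSpace ℝ (Fin d)} (ht : ‖t‖ ≤ ε + γ) :
    proxHuber γ ε t = (ε / (ε + γ)) • t := by
  unfold proxHuber
  split_ifs with h
  · simp [h]
  · congr 1
    rw [max_eq_left]
    have htpos : 0 < ‖t‖ := norm_pos_iff.mpr h
    have h1 : γ / (ε + γ) ≤ γ / ‖t‖ := by gcongr
    have hid : ε / (ε + γ) = 1 - γ / (ε + γ) := by field_simp; ring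
    linarith

lemma proxHuber_of_ge {d : ℕ} {γ ε : ℝ} (hε : 0 < ε) (hγ : 0 < γ)
    {t : EuclideanSpace ℝ (Fin d)} (ht : ε + γ ≤ ‖t‖) :
    proxHuber γ ε t = t - (γ / ‖t‖) • t := by
  have htpos : 0 < ‖t‖ := lt_of_lt_of_le (by linarith) ht
  have h0 : t ≠ 0 := by simpa [norm_pos_iff] using htpos
  unfold proxHuber
  rw [if_neg h0, max_eq_right, sub_smul, one_smul]
  have h1 : γ / ‖t‖ ≤ γ / (ε + γ) := by gcongr
  have hid : ε / (ε + γ) = 1 - γ / (ε + γ) := by field_simp; ring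
  linarith

lemma outer_est {d : ℕ} {γ ε : ℝ} (hε : 0 < ε) (hγ : 0 < γ)
    {t h : EuclideanSpace ℝ (Fin d)} (hht : ‖h‖ ≤ γ + ε)
    (ht : γ + ε ≤ ‖t‖) (hs : γ + ε < ‖t + h‖) :
    ‖proxHuber γ ε (t + h) - proxHuber γ ε t - newtonProxHuber γ ε (t + h) h‖
      ≤ (4 * γ / (γ + ε) ^ 2) * ‖h‖ ^ 2 := by
  set r : ℝ := γ + ε with hr_def
  have hr : 0 < r := by positivity
  set A : ℝ := ‖t + h‖ with hA_def
  set B : ℝ := ‖t‖ with hB_def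
  set H : ℝ := ‖h‖ with hH_def
  have hrA : r ≤ A := hs.le
  have hA0 : 0 < A := lt_trans hr hs
  have hB0 : 0 < B := lt_of_lt_of_le hr ht
  have hH0 : 0 ≤ H := norm_nonneg _
  set p : ℝ := ⟪t + h, h⟫ with hp_def
  have hp : p = (A ^ 2 - B ^ 2 + H ^ 2) / 2 := by
    have h1 : ‖(t + h) - h‖ ^ 2 = ‖t + h‖ ^ 2 - 2 * ⟪t + h, h⟫ + ‖h‖ ^ 2 :=
      norm_sub_sq_real _ _
    have h2 : (t + h) - h = t := by abel
    rw [h2] at h1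
    rw [hp_def, hA_def, hB_def, hH_def]
    linarith
  rw [proxHuber_of_ge hε hγ (by rw [add_comm ε γ]; exact hs.le),
    proxHuber_of_ge hε hγ (by rw [add_comm ε γ]; exact ht),
    newtonProxHuber, if_pos hs]
  have hkey : ((t + h) - (γ / A) • (t + h)) - (t - (γ / B) • t)
      - (h - (γ / A) • (h - (p / A ^ 2) • (t + h)))
      = (γ / B - γ / A - γ * p / A ^ 3) • (t + h) - (γ / B - γ / A) • h := by
    match_scalars <;> field_simp <;> ring
  rw [hkey]
  have habsAB : |A - B| ≤ H := by
    rw [hA_def, hB_def, hH_def]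
    simpa using abs_norm_sub_norm_le (t + h) t
  have hBle : B ≤ A + H := by
    rw [hA_def, hB_def, hH_def]
    calc ‖t‖ = ‖(t + h) - h‖ := by rw [show (t + h) - h = t by abel]
      _ ≤ ‖t + h‖ + ‖h‖ := norm_sub_le _ _
  -- bound second term
  have hc2 : |γ / B - γ / A| * H ≤ γ * H ^ 2 / r ^ 2 := by
    have e2 : γ / B - γ / A = γ * (A - B) / (A * B) := by field_simp
    rw [e2, abs_div, abs_mul, abs_of_pos hγ, abs_of_pos (by positivity : (0:ℝ) < A * B)]
    calc γ * |A - B| / (A * B) * H ≤ γ * H / (r * r) * H := by gcongr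
      _ = γ * H ^ 2 / r ^ 2 := by ring
  -- bound first term
  have e1 : (γ / B - γ / A - γ * p / A ^ 3) * A
      = γ * ((A - B) ^ 2 * (2 * A + B) - B * H ^ 2) / (2 * B * A ^ 2) := by
    rw [hp]; field_simp; ring
  have hsq : (A - B) ^ 2 ≤ H ^ 2 := by
    rw [← sq_abs]
    exact pow_le_pow_left₀ (abs_nonneg _) habsAB 2
  have hnum : |(A - B) ^ 2 * (2 * A + B) - B * H ^ 2| ≤ H ^ 2 * (2 * (A + B)) := by
    rw [abs_le]
    constructor
    · nlinarith [mul_nonneg (sq_nonneg (A - B)) (by positivity : (0:ℝ) ≤ 2 * A + B),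
        mul_nonneg (sq_nonneg H) hB0.le, mul_nonneg (sq_nonneg H) hA0.le]
    · nlinarith [mul_le_mul_of_nonneg_right hsq (by positivity : (0:ℝ) ≤ 2 * A + B),
        mul_nonneg (sq_nonneg H) hB0.le]
  have hc1 : |γ / B - γ / A - γ * p / A ^ 3| * A ≤ 3 * γ * H ^ 2 / r ^ 2 := by
    have : |(γ / B - γ / A - γ * p / A ^ 3) * A|
        ≤ γ * (H ^ 2 * (2 * (A + B))) / (2 * B * A ^ 2) := by
      rw [e1, abs_div, abs_mul, abs_of_pos hγ,
        abs_of_pos (by positivity : (0:ℝ) < 2 * B * A ^ 2)]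
      gcongr
    have hABle : A + B ≤ 3 * A := by
      have : r ≤ A := hs.le
      linarith [hht]
    calc |γ / B - γ / A - γ * p / A ^ 3| * A
        = |(γ / B - γ / A - γ * p / A ^ 3) * A| := by
          rw [abs_mul, abs_of_pos hA0]
      _ ≤ γ * (H ^ 2 * (2 * (A + B))) / (2 * B * A ^ 2) := this
      _ ≤ γ * (H ^ 2 * (2 * (3 * A))) / (2 * r * A ^ 2) := by gcongr
      _ = 3 * γ * H ^ 2 / (r * A) := by field_simp
      _ ≤ 3 * γ * H ^ 2 / (r * r) := by gcongr
      _ = 3 * γ * H ^ 2 / r ^ 2 := by ring_nf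
  calc ‖(γ / B - γ / A - γ * p / A ^ 3) • (t + h) - (γ / B - γ / A) • h‖
      ≤ ‖(γ / B - γ / A - γ * p / A ^ 3) • (t + h)‖ + ‖(γ / B - γ / A) • h‖ :=
        norm_sub_le _ _
    _ = |γ / B - γ / A - γ * p / A ^ 3| * A + |γ / B - γ / A| * H := by
        rw [norm_smul, norm_smul, Real.norm_eq_abs, Real.norm_eq_abs]
    _ ≤ 3 * γ * H ^ 2 / r ^ 2 + γ * H ^ 2 / r ^ 2 := add_le_add hc1 hc2
    _ = (4 * γ / r ^ 2) * H ^ 2 := by ring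

/-- The proximity map `P_{γ,ε}` is Newton differentiable on `ℝ^d` with Newton
derivative `J_{γ,ε}`. -/
theorem proxHuber_newton_differentiable (d : ℕ) (hd : 1 ≤ d) (ε γ : ℝ)
    (hε : 0 < ε) (hγ : 0 < γ) (t : EuclideanSpace ℝ (Fin d)) (η : ℝ) (hη : 0 < η) :
    ∃ δ : ℝ, 0 < δ ∧ ∀ h : EuclideanSpace ℝ (Fin d), 0 < ‖h‖ → ‖h‖ < δ →
      ‖proxHuber γ ε (t + h) - proxHuber γ ε t - newtonProxHuber γ ε (t + h) h‖
        ≤ η * ‖h‖ := by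
  set r : ℝ := γ + ε with hr_def
  have hr : 0 < r := by positivity
  -- the good δ for outer estimates
  set δ₀ : ℝ := min r (η * r ^ 2 / (4 * γ)) with hδ₀_def
  have hδ₀ : 0 < δ₀ := lt_min hr (by positivity)
  have final : ∀ h : EuclideanSpace ℝ (Fin d), 0 < ‖h‖ → ‖h‖ < δ₀ →
      r ≤ ‖t‖ → r < ‖t + h‖ →
      ‖proxHuber γ ε (t + h) - proxHuber γ ε t - newtonProxHuber γ ε (t + h) h‖
        ≤ η * ‖h‖ := by
    intro h hh hhδ htB hsA
    have h1 : ‖h‖ ≤ r := le_trans hhδ.le (min_le_left _ _)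
    have h2 : ‖h‖ ≤ η * r ^ 2 / (4 * γ) := le_trans hhδ.le (min_le_right _ _)
    calc ‖proxHuber γ ε (t + h) - proxHuber γ ε t - newtonProxHuber γ ε (t + h) h‖
        ≤ (4 * γ / r ^ 2) * ‖h‖ ^ 2 := outer_est hε hγ h1 htB hsA
      _ = (4 * γ / r ^ 2) * ‖h‖ * ‖h‖ := by ring
      _ ≤ (4 * γ / r ^ 2) * (η * r ^ 2 / (4 * γ)) * ‖h‖ := by gcongr
      _ = η * ‖h‖ := by field_simp
  rcases lt_trichotomy ‖t‖ r with hlt | heq | hgt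
  · -- inner case
    refine ⟨r - ‖t‖, by linarith, fun h hh hhδ => ?_⟩
    have hA : ‖t + h‖ ≤ r := le_trans (norm_add_le t h) (by linarith)
    rw [proxHuber_of_le hε hγ (by rw [add_comm ε γ]; exact hA),
      proxHuber_of_le hε hγ (by rw [add_comm ε γ]; exact hlt.le),
      newtonProxHuber, if_neg (not_lt.mpr hA)]
    have : (ε / (ε + γ)) • (t + h) - (ε / (ε + γ)) • t - (ε / (ε + γ)) • h
        = (0 : EuclideanSpace ℝ (Fin d)) := by module
    rw [this, norm_zero]
    positivity
  · -- boundary case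
    refine ⟨δ₀, hδ₀, fun h hh hhδ => ?_⟩
    rcases le_or_gt ‖t + h‖ r with hA | hA
    · rw [proxHuber_of_le hε hγ (by rw [add_comm ε γ]; exact hA),
        proxHuber_of_le hε hγ (by rw [add_comm ε γ]; exact heq.le),
        newtonProxHuber, if_neg (not_lt.mpr hA)]
      have : (ε / (ε + γ)) • (t + h) - (ε / (ε + γ)) • t - (ε / (ε + γ)) • h
          = (0 : EuclideanSpace ℝ (Fin d)) := by module
      rw [this, norm_zero]
      positivity
    · exact final h hh hhδ heq.ge hA
  · -- outer case
    refine ⟨min δ₀ (‖t‖ - r), lt_min hδ₀ (by linarith), fun h hh hhδ => ?_⟩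
    have hhδ₀ : ‖h‖ < δ₀ := lt_of_lt_of_le hhδ (min_le_left _ _)
    have hA : r < ‖t + h‖ := by
      have h1 : ‖h‖ < ‖t‖ - r := lt_of_lt_of_le hhδ (min_le_right _ _)
      have h2 : ‖t‖ ≤ ‖t + h‖ + ‖h‖ := by
        calc ‖t‖ = ‖(t + h) - h‖ := by rw [show (t + h) - h = t by abel]
          _ ≤ ‖t + h‖ + ‖h‖ := norm_sub_le _ _
      linarith
    exact final h hh hhδ₀ hgt.le hA
end

section
/- For every dimension d ≥ 1 and all ε, γ > 0, the proximity map P_{γ,ε} is Fréchet differentiable at every point t ∈ ℝ^d with ‖t‖ ≠ γ + ε, and its Fréchet derivative at such t is the linear map x ↦ J_{γ,ε}(t)·x. -/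
open Classical RealInnerProductSpace

/-- Derivative of the norm at a nonzero point of a Euclidean space. -/
lemma hasFDerivAt_norm' (t : EuclideanSpace ℝ (Fin d)) (ht : t ≠ 0) :
    HasFDerivAt (fun s : EuclideanSpace ℝ (Fin d) => ‖s‖) (‖t‖⁻¹ • innerSL ℝ t) t := by
  have h2 : HasFDerivAt (fun s : EuclideanSpace ℝ (Fin d) => ‖s‖ ^ 2)
      (2 • (innerSL ℝ t)) t := (hasStrictFDerivAt_norm_sq t).hasFDerivAt
  have hne : ‖t‖ ^ 2 ≠ 0 := pow_ne_zero _ (norm_ne_zero_iff.mpr ht)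
  have h3 := h2.sqrt hne
  have h4 : (fun s : EuclideanSpace ℝ (Fin d) => Real.sqrt (‖s‖ ^ 2)) = fun s => ‖s‖ := by
    funext s; rw [Real.sqrt_sq (norm_nonneg s)]
  rw [h4] at h3
  refine h3.congr_fderiv ?_
  rw [Real.sqrt_sq (norm_nonneg t)]
  ext x
  simp [smul_smul]
  ring_nf


/-- The proximity map `P_{γ,ε}` is Fréchet differentiable at every `t` with
`‖t‖ ≠ γ + ε`, with Fréchet derivative `x ↦ J_{γ,ε}(t) x`. -/
theorem proxHuber_frechet_differentiable (d : ℕ) (hd : 1 ≤ d) (ε γ : ℝ)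
    (hε : 0 < ε) (hγ : 0 < γ) (t : EuclideanSpace ℝ (Fin d))
    (ht : ‖t‖ ≠ γ + ε) :
    ∃ L : EuclideanSpace ℝ (Fin d) →L[ℝ] EuclideanSpace ℝ (Fin d),
      (∀ x, L x = newtonProxHuber γ ε t x) ∧ HasFDerivAt (proxHuber γ ε) L t := by
  rcases lt_or_gt_of_ne ht with hlt | hgt
  · -- case ‖t‖ < γ + ε : locally linear
    refine ⟨(ε / (ε + γ)) • ContinuousLinearMap.id ℝ _, ?_, ?_⟩
    · intro x
      simp [newtonProxHuber, not_lt.mpr hlt.le]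
    · have heq : ∀ᶠ s in nhds t, proxHuber γ ε s = (ε / (ε + γ)) • s := by
        have : ∀ᶠ s in nhds t, ‖s‖ < γ + ε :=
          (continuous_norm.continuousAt).eventually_lt continuousAt_const hlt
        filter_upwards [this] with s hs
        unfold proxHuber
        by_cases h0 : s = 0
        · simp [h0]
        · rw [if_neg h0]
          congr 1
          have hns : 0 < ‖s‖ := norm_pos_iff.mpr h0
          have : 1 - γ / ‖s‖ ≤ ε / (ε + γ) := by
            have h1 : ε / (ε + γ) = 1 - γ / (ε + γ) := by field_simp; ring
            rw [h1, sub_le_sub_iff_left]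
            gcongr
            linarith
          exact max_eq_left this
      have hlin : HasFDerivAt (fun s : EuclideanSpace ℝ (Fin d) => (ε / (ε + γ)) • s)
          ((ε / (ε + γ)) • ContinuousLinearMap.id ℝ _) t :=
        ((ContinuousLinearMap.id ℝ (EuclideanSpace ℝ (Fin d))).hasFDerivAt (x := t)).const_smul (ε / (ε + γ))
      exact hlin.congr_of_eventuallyEq heq
  · -- case γ + ε < ‖t‖
    have ht0 : t ≠ 0 := by
      intro h; rw [h, norm_zero] at hgt; linarith
    have hnt : (0:ℝ) < ‖t‖ := by linarith [hε, hγ]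
    -- derivative of c s = γ / ‖s‖
    have hc : HasFDerivAt (fun s : EuclideanSpace ℝ (Fin d) => γ / ‖s‖)
        (γ • -(‖t‖ ^ 2)⁻¹ • ‖t‖⁻¹ • innerSL ℝ t) t := by
      have h1 := (hasDerivAt_inv hnt.ne').comp_hasFDerivAt t (hasFDerivAt_norm' t ht0)
      have h2 := h1.const_mul γ
      simpa [div_eq_mul_inv, Function.comp] using h2
    have hid : HasFDerivAt (fun s : EuclideanSpace ℝ (Fin d) => s)
        (ContinuousLinearMap.id ℝ _) t := (ContinuousLinearMap.id ℝ _).hasFDerivAt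
    have hsm := hc.smul hid
    have hg := hid.sub hsm
    refine ⟨ContinuousLinearMap.id ℝ (EuclideanSpace ℝ (Fin d)) -
      ((γ / ‖t‖) • ContinuousLinearMap.id ℝ (EuclideanSpace ℝ (Fin d)) +
        (γ • -(‖t‖ ^ 2)⁻¹ • ‖t‖⁻¹ • (innerSL ℝ) t).smulRight t), ?_, ?_⟩
    · intro x
      rw [newtonProxHuber, if_pos hgt]
      simp only [ContinuousLinearMap.coe_sub', Pi.sub_apply, ContinuousLinearMap.add_apply,
        ContinuousLinearMap.coe_smul', Pi.smul_apply, ContinuousLinearMap.id_apply,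
        ContinuousLinearMap.smulRight_apply, ContinuousLinearMap.coe_id', id_eq,
        innerSL_apply_apply]
      match_scalars
      · field_simp
      · field_simp
        simp only [smul_eq_mul]
        field_simp
    · have heq : ∀ᶠ s in nhds t, proxHuber γ ε s = s - (γ / ‖s‖) • s := by
        have : ∀ᶠ s in nhds t, γ + ε < ‖s‖ :=
          continuousAt_const.eventually_lt (continuous_norm.continuousAt) hgt
        filter_upwards [this] with s hs
        have hns : (0:ℝ) < ‖s‖ := by linarith
        have h0 : s ≠ 0 := by intro h; rw [h, norm_zero] at hns; linarith
        rw [proxHuber, if_neg h0]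
        have hle : ε / (ε + γ) ≤ 1 - γ / ‖s‖ := by
          have h1 : ε / (ε + γ) = 1 - γ / (ε + γ) := by field_simp; ring
          rw [h1, sub_le_sub_iff_left]
          gcongr <;> linarith
        rw [max_eq_right hle, sub_smul, one_smul]
      exact hg.congr_of_eventuallyEq heq
end

section
/- For every dimension d ≥ 1, all σ, ε > 0, and every w ∈ ℝ^d, the point Q_{σ,ε}(w) is the unique minimizer over the closed unit ball {y ∈ ℝ^d : ‖y‖ ≤ 1} of the function y ↦ σ·(ε/2)·‖y‖² + (1/2)·‖y − w‖²; that is, Q_{σ,ε} realizes the proximity operator of σ times the Fenchel conjugate of the Huber-regularized norm. -/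
open Classical

/-- The dual proximity map `Q_{σ,ε}`. -/
noncomputable def dualProxHuber {d : ℕ} (σ ε : ℝ) (w : EuclideanSpace ℝ (Fin d)) :
    EuclideanSpace ℝ (Fin d) :=
  if ‖w‖ ≤ 1 + σ * ε then (1 + σ * ε)⁻¹ • w else ‖w‖⁻¹ • w

lemma huber_expand {E : Type*} [NormedAddCommGroup E] [InnerProductSpace ℝ E]
    (σ ε : ℝ) (w q y : E) :
    σ * (ε / 2) * ‖y‖ ^ 2 + (1 / 2) * ‖y - w‖ ^ 2
      - (σ * (ε / 2) * ‖q‖ ^ 2 + (1 / 2) * ‖q - w‖ ^ 2)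
    = (1 + σ * ε) / 2 * ‖y - q‖ ^ 2
      + inner ℝ ((1 + σ * ε) • q - w) (y - q) := by
  have h : ∀ x : E, ‖x‖ ^ 2 = inner ℝ x x := fun x => (real_inner_self_eq_norm_sq x).symm
  simp only [h, inner_sub_left, inner_sub_right, real_inner_smul_left,
    real_inner_comm w q, real_inner_comm w y, real_inner_comm q y]
  ring

lemma huber_vi {d : ℕ} (σ ε : ℝ) (hσ : 0 < σ) (hε : 0 < ε)
    (w : EuclideanSpace ℝ (Fin d)) (y : EuclideanSpace ℝ (Fin d)) (hy : ‖y‖ ≤ 1) :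
    (0:ℝ) ≤ inner ℝ ((1 + σ * ε) • dualProxHuber σ ε w - w) (y - dualProxHuber σ ε w) := by
  have ha : (0:ℝ) < 1 + σ * ε := by nlinarith
  unfold dualProxHuber
  by_cases hw : ‖w‖ ≤ 1 + σ * ε
  · simp only [hw, if_true]
    rw [smul_smul, mul_inv_cancel₀ ha.ne', one_smul, sub_self, inner_zero_left]
  · simp only [hw, if_false]
    have hwpos : (0:ℝ) < ‖w‖ := lt_trans ha (not_le.mp hw)
    have h1 : (1 + σ * ε) • (‖w‖⁻¹ • w) - w = ((1 + σ * ε) * ‖w‖⁻¹ - 1) • w := by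
      rw [smul_smul, sub_smul, one_smul]
    rw [h1, real_inner_smul_left, inner_sub_right, real_inner_smul_right,
      real_inner_self_eq_norm_sq]
    have hcs : inner ℝ w y ≤ ‖w‖ := by
      calc (inner ℝ w y : ℝ) ≤ ‖w‖ * ‖y‖ := real_inner_le_norm w y
        _ ≤ ‖w‖ * 1 := by nlinarith
        _ = ‖w‖ := mul_one _
    have hco : (1 + σ * ε) * ‖w‖⁻¹ - 1 ≤ 0 := by
      rw [sub_nonpos]
      calc (1 + σ * ε) * ‖w‖⁻¹ = (1 + σ * ε) / ‖w‖ := by ring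
        _ ≤ 1 := by rw [div_le_one hwpos]; exact le_of_lt (not_le.mp hw)
    have h2 : ‖w‖⁻¹ * ‖w‖ ^ 2 = ‖w‖ := by field_simp
    rw [h2]
    nlinarith [hcs, hco]


/-- `Q_{σ,ε}(w)` is the unique minimizer over the closed unit ball of
`y ↦ σ(ε/2)‖y‖² + ½‖y − w‖²`; it realizes the proximity operator of `σ` times
the Fenchel conjugate of the Huber-regularized norm. -/
theorem dualProxHuber_is_prox (d : ℕ) (hd : 1 ≤ d) (σ ε : ℝ)
    (hσ : 0 < σ) (hε : 0 < ε) (w : EuclideanSpace ℝ (Fin d)) :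
    ‖dualProxHuber σ ε w‖ ≤ 1 ∧
    (∀ y : EuclideanSpace ℝ (Fin d), ‖y‖ ≤ 1 →
      σ * (ε / 2) * ‖dualProxHuber σ ε w‖ ^ 2 + (1 / 2) * ‖dualProxHuber σ ε w - w‖ ^ 2
        ≤ σ * (ε / 2) * ‖y‖ ^ 2 + (1 / 2) * ‖y - w‖ ^ 2) ∧
    (∀ y : EuclideanSpace ℝ (Fin d), ‖y‖ ≤ 1 →
      (∀ y' : EuclideanSpace ℝ (Fin d), ‖y'‖ ≤ 1 →
        σ * (ε / 2) * ‖y‖ ^ 2 + (1 / 2) * ‖y - w‖ ^ 2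
          ≤ σ * (ε / 2) * ‖y'‖ ^ 2 + (1 / 2) * ‖y' - w‖ ^ 2) →
      y = dualProxHuber σ ε w) := by
  have ha : (0:ℝ) < 1 + σ * ε := by nlinarith
  set q := dualProxHuber σ ε w with hq
  have hqnorm : ‖q‖ ≤ 1 := by
    rw [hq]; unfold dualProxHuber
    by_cases hw : ‖w‖ ≤ 1 + σ * ε
    · simp only [hw, if_true, norm_smul, Real.norm_eq_abs, abs_inv, abs_of_pos ha]
      rw [inv_mul_le_iff₀ ha, mul_one]; exact hw
    · simp only [hw, if_false, norm_smul, Real.norm_eq_abs, abs_inv]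
      have hwpos : (0:ℝ) < ‖w‖ := lt_trans ha (not_le.mp hw)
      rw [abs_of_pos hwpos, inv_mul_cancel₀ hwpos.ne']
  have hmin : ∀ y : EuclideanSpace ℝ (Fin d), ‖y‖ ≤ 1 →
      σ * (ε / 2) * ‖q‖ ^ 2 + (1 / 2) * ‖q - w‖ ^ 2
        ≤ σ * (ε / 2) * ‖y‖ ^ 2 + (1 / 2) * ‖y - w‖ ^ 2 := by
    intro y hy
    have h := huber_expand σ ε w q y
    have hvi := huber_vi σ ε hσ hε w y hy
    rw [← hq] at hvi
    nlinarith [sq_nonneg ‖y - q‖]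
  refine ⟨hqnorm, hmin, ?_⟩
  intro y hy hymin
  have h1 := hymin q hqnorm
  have h2 := hmin y hy
  have h := huber_expand σ ε w q y
  have hvi := huber_vi σ ε hσ hε w y hy
  rw [← hq] at hvi
  have hz : ‖y - q‖ ^ 2 ≤ 0 := by nlinarith
  have : y - q = 0 := by
    have := norm_eq_zero.mp (le_antisymm (by nlinarith [sq_nonneg ‖y - q‖, norm_nonneg (y - q)] : ‖y - q‖ ≤ 0) (norm_nonneg _))
    exact this
  exact sub_eq_zero.mp this
end

section
/- For every dimension d ≥ 1, all ε, γ > 0, and every t ∈ ℝ^d, the Moreau decomposition for the Huber-regularized norm holds in explicit form: γ·Q_{1/γ,ε}(t/γ) + P_{γ,ε}(t) = t. -/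
open Classical

/-- Moreau decomposition for the Huber-regularized norm in explicit form:
`γ Q_{1/γ,ε}(t/γ) + P_{γ,ε}(t) = t`. -/
theorem huber_moreau_decomposition (d : ℕ) (hd : 1 ≤ d) (ε γ : ℝ)
    (hε : 0 < ε) (hγ : 0 < γ) (t : EuclideanSpace ℝ (Fin d)) :
    γ • dualProxHuber (1 / γ) ε (γ⁻¹ • t) + proxHuber γ ε t = t := by
  unfold proxHuber dualProxHuber
  by_cases h0 : t = 0
  · simp [h0]
  · have hs : (0:ℝ) < ‖t‖ := norm_pos_iff.mpr h0
    have hnorm : ‖γ⁻¹ • t‖ = γ⁻¹ * ‖t‖ := by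
      rw [norm_smul, Real.norm_eq_abs, abs_of_pos (inv_pos.mpr hγ)]
    rw [if_neg h0]
    by_cases hc : ‖t‖ ≤ γ + ε
    · have hcond : ‖γ⁻¹ • t‖ ≤ 1 + 1 / γ * ε := by
        rw [hnorm]
        have hγi : γ⁻¹ * γ = 1 := inv_mul_cancel₀ hγ.ne'
        have h := mul_le_mul_of_nonneg_left hc (inv_pos.mpr hγ).le
        rw [one_div]
        nlinarith
      rw [if_pos hcond]
      have hmax : max (ε / (ε + γ)) (1 - γ / ‖t‖) = ε / (ε + γ) := by
        apply max_eq_left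
        have h1 : γ / (γ + ε) ≤ γ / ‖t‖ :=
          div_le_div_of_nonneg_left hγ.le hs hc
        have h2 : 1 - γ / ‖t‖ ≤ 1 - γ / (γ + ε) := by linarith
        have h3 : 1 - γ / (γ + ε) = ε / (ε + γ) := by
          rw [add_comm ε γ, sub_eq_iff_eq_add, ← add_div, add_comm ε γ,
            div_self (by positivity : γ + ε ≠ 0)]
        linarith
      rw [hmax, smul_smul, smul_smul, ← add_smul]
      have : γ * (1 + 1 / γ * ε)⁻¹ * γ⁻¹ + ε / (ε + γ) = 1 := by
        have hgε : γ + ε ≠ 0 := by positivity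
        have hεγ : ε + γ ≠ 0 := by positivity
        field_simp
        ring
      rw [this, one_smul]
    · have hcond : ¬ ‖γ⁻¹ • t‖ ≤ 1 + 1 / γ * ε := by
        rw [hnorm]
        push_neg at hc ⊢
        have hγi : γ⁻¹ * γ = 1 := inv_mul_cancel₀ hγ.ne'
        have h := mul_lt_mul_of_pos_left hc (inv_pos.mpr hγ)
        rw [one_div]
        nlinarith
      rw [if_neg hcond]
      have hmax : max (ε / (ε + γ)) (1 - γ / ‖t‖) = 1 - γ / ‖t‖ := by
        apply max_eq_right
        push_neg at hc
        have h1 : γ / ‖t‖ < γ / (γ + ε) :=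
          div_lt_div_of_pos_left hγ (by positivity) hc
        have h3 : 1 - γ / (γ + ε) = ε / (ε + γ) := by
          rw [add_comm ε γ, sub_eq_iff_eq_add, ← add_div, add_comm ε γ,
            div_self (by positivity : γ + ε ≠ 0)]
        linarith
      rw [hmax, hnorm, smul_smul, smul_smul, ← add_smul]
      have : γ * (γ⁻¹ * ‖t‖)⁻¹ * γ⁻¹ + (1 - γ / ‖t‖) = 1 := by
        field_simp
        ring
      rw [this, one_smul]
end

section
/- For every dimension d ≥ 1 and all ε, γ > 0, the residual map G_{γ,ε} : ℝ^d × ℝ^d → ℝ^d defined by G_{γ,ε}(t, y) := t − P_{γ,ε}(t + γ·y) satisfies, for all t₁, t₂, y₁, y₂ ∈ ℝ^d, the Lipschitz estimate ‖G_{γ,ε}(t₁, y₁) − G_{γ,ε}(t₂, y₂)‖ ≤ 2·‖t₁ − t₂‖ + γ·‖y₁ − y₂‖; in particular the Lipschitz constant is independent of the regularization parameter ε. -/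
open Classical

/-- The residual map `G_{γ,ε}(t, y) = t − P_{γ,ε}(t + γ y)`. -/
noncomputable def residualHuber {d : ℕ} (γ ε : ℝ)
    (t y : EuclideanSpace ℝ (Fin d)) : EuclideanSpace ℝ (Fin d) :=
  t - proxHuber γ ε (t + γ • y)

lemma proxHuber_nonexpansive {d : ℕ} (ε γ : ℝ) (hε : 0 < ε) (hγ : 0 < γ)
    (a b : EuclideanSpace ℝ (Fin d)) :
    ‖proxHuber γ ε a - proxHuber γ ε b‖ ≤ ‖a - b‖ := by
  have hεγ : 0 < ε + γ := by linarith
  set c : ℝ := ε / (ε + γ) with hc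
  have hc0 : 0 ≤ c := div_nonneg hε.le hεγ.le
  have hc1 : c ≤ 1 := by
    rw [hc, div_le_one hεγ]; linarith
  -- bounds on the scaling factor
  have hs0 : ∀ x : EuclideanSpace ℝ (Fin d), 0 ≤ max c (1 - γ / ‖x‖) :=
    fun x => le_trans hc0 (le_max_left _ _)
  have hs1 : ∀ x : EuclideanSpace ℝ (Fin d), max c (1 - γ / ‖x‖) ≤ 1 := by
    intro x
    refine max_le hc1 ?_
    have : 0 ≤ γ / ‖x‖ := div_nonneg hγ.le (norm_nonneg x)
    linarith
  by_cases ha : a = 0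
  · by_cases hb : b = 0
    · simp [proxHuber, ha, hb]
    · rw [ha, show proxHuber γ ε (0 : EuclideanSpace ℝ (Fin d)) = 0 by
        simp [proxHuber], zero_sub, norm_neg, proxHuber, if_neg hb,
        norm_smul, Real.norm_eq_abs, abs_of_nonneg (hs0 b)]
      calc max c (1 - γ / ‖b‖) * ‖b‖ ≤ 1 * ‖b‖ :=
            mul_le_mul_of_nonneg_right (hs1 b) (norm_nonneg b)
        _ = ‖(0 : EuclideanSpace ℝ (Fin d)) - b‖ := by simp
  · by_cases hb : b = 0
    · rw [hb, show proxHuber γ ε (0 : EuclideanSpace ℝ (Fin d)) = 0 by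
        simp [proxHuber], sub_zero, proxHuber, if_neg ha,
        norm_smul, Real.norm_eq_abs, abs_of_nonneg (hs0 a)]
      calc max c (1 - γ / ‖a‖) * ‖a‖ ≤ 1 * ‖a‖ :=
            mul_le_mul_of_nonneg_right (hs1 a) (norm_nonneg a)
        _ = ‖a - (0 : EuclideanSpace ℝ (Fin d))‖ := by simp
    · -- main case
      set α := ‖a‖ with hα
      set β := ‖b‖ with hβ
      have hα0 : 0 < α := norm_pos_iff.mpr ha
      have hβ0 : 0 < β := norm_pos_iff.mpr hb
      set s : ℝ := max c (1 - γ / α) with hsdef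
      set u : ℝ := max c (1 - γ / β) with hudef
      have hs0' : 0 ≤ s := hs0 a
      have hs1' : s ≤ 1 := hs1 a
      have hu0' : 0 ≤ u := hs0 b
      have hu1' : u ≤ 1 := hs1 b
      have hP : proxHuber γ ε a - proxHuber γ ε b = s • a - u • b := by
        simp only [proxHuber, if_neg ha, if_neg hb]; rfl
      -- Lipschitz property of r ↦ max (c*r) (r - γ)
      have hsα : s * α = max (c * α) (α - γ) := by
        rw [hsdef, max_mul_of_nonneg _ _ hα0.le, one_sub_mul,
          div_mul_cancel₀ _ hα0.ne']
      have huβ : u * β = max (c * β) (β - γ) := by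
        rw [hudef, max_mul_of_nonneg _ _ hβ0.le, one_sub_mul,
          div_mul_cancel₀ _ hβ0.ne']
      have hLip : |s * α - u * β| ≤ |α - β| := by
        rw [hsα, huβ]
        refine le_trans (abs_max_sub_max_le_max _ _ _ _) (max_le ?_ (by
          rw [sub_sub_sub_cancel_right]))
        rw [← mul_sub, abs_mul, abs_of_nonneg hc0]
        nlinarith [abs_nonneg (α - β)]
      have hABsq : (s * α - u * β) ^ 2 ≤ (α - β) ^ 2 := by
        have h := mul_self_le_mul_self (abs_nonneg (s * α - u * β)) hLip
        rw [abs_mul_abs_self, abs_mul_abs_self] at h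
        nlinarith [h]
      set p : ℝ := inner ℝ a b with hp
      have hpαβ : p ≤ α * β := real_inner_le_norm a b
      have hsu1 : s * u ≤ 1 := mul_le_one₀ hs1' hu0' hu1'
      have key : ‖s • a - u • b‖ ^ 2 ≤ ‖a - b‖ ^ 2 := by
        rw [norm_sub_sq_real, norm_sub_sq_real, norm_smul, norm_smul,
          real_inner_smul_left, real_inner_smul_right,
          Real.norm_eq_abs, Real.norm_eq_abs, abs_of_nonneg hs0',
          abs_of_nonneg hu0', mul_pow, mul_pow, ← hα, ← hβ, ← hp]
        nlinarith [mul_nonneg (by linarith : (0:ℝ) ≤ 1 - s * u)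
          (by linarith : (0:ℝ) ≤ α * β - p), hABsq]
      rw [hP]
      have := Real.sqrt_le_sqrt key
      rwa [Real.sqrt_sq (norm_nonneg _), Real.sqrt_sq (norm_nonneg _)] at this

/-- The residual map `G_{γ,ε}` is Lipschitz continuous with constants
independent of the regularization parameter `ε`:
`‖G(t₁,y₁) − G(t₂,y₂)‖ ≤ 2‖t₁ − t₂‖ + γ‖y₁ − y₂‖`. -/
theorem residualHuber_lipschitz (d : ℕ) (hd : 1 ≤ d) (ε γ : ℝ)
    (hε : 0 < ε) (hγ : 0 < γ) (t₁ t₂ y₁ y₂ : EuclideanSpace ℝ (Fin d)) :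
    ‖residualHuber γ ε t₁ y₁ - residualHuber γ ε t₂ y₂‖
      ≤ 2 * ‖t₁ - t₂‖ + γ * ‖y₁ - y₂‖ := by
  set u₁ := t₁ + γ • y₁ with hu₁
  set u₂ := t₂ + γ • y₂ with hu₂
  have h1 : residualHuber γ ε t₁ y₁ - residualHuber γ ε t₂ y₂
      = (t₁ - t₂) - (proxHuber γ ε u₁ - proxHuber γ ε u₂) := by
    simp only [residualHuber, hu₁, hu₂]; abel
  have h2 : ‖u₁ - u₂‖ ≤ ‖t₁ - t₂‖ + γ * ‖y₁ - y₂‖ := by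
    have : u₁ - u₂ = (t₁ - t₂) + γ • (y₁ - y₂) := by
      simp only [hu₁, hu₂, smul_sub]; abel
    rw [this]
    refine le_trans (norm_add_le _ _) ?_
    rw [norm_smul, Real.norm_eq_abs, abs_of_pos hγ]
  calc ‖residualHuber γ ε t₁ y₁ - residualHuber γ ε t₂ y₂‖
      ≤ ‖t₁ - t₂‖ + ‖proxHuber γ ε u₁ - proxHuber γ ε u₂‖ := by
        rw [h1]; exact norm_sub_le _ _
    _ ≤ ‖t₁ - t₂‖ + ‖u₁ - u₂‖ := by
        have := proxHuber_nonexpansive ε γ hε hγ u₁ u₂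
        linarith
    _ ≤ ‖t₁ - t₂‖ + (‖t₁ - t₂‖ + γ * ‖y₁ - y₂‖) := by linarith
    _ = 2 * ‖t₁ - t₂‖ + γ * ‖y₁ - y₂‖ := by ring
end
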